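/- Every two-dimensional face of a 2-neighborly polytope is a triangle: let S be a finite subset of EuclideanSpace ℝ (Fin n) and P = convexHull ℝ S, and assume that for all u, v ∈ S with u ≠ v the segment from u to v is a face of P (IsExtreme ℝ P (segment ℝ u v)). Then for every closed convex set F with IsExtreme ℝ P F whose vector span has ℝ-dimension 2, there exist affinely independent points a, b, c with F = convexHull ℝ {a, b, c}. -/

import Mathlib

/-- Every two-dimensional face of a 2-neighborly polytope is a triangle: if `P` is the
convex hull of a finite set `S` such that the segment between any two distinct points of
`S` is a face of `P`, then every closed convex face of `P` whose vector span is
two-dimensional is a triangle. -/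
theorem stmt_17 (n : ℕ)
    (S : Finset (EuclideanSpace ℝ (Fin n)))
    (P : Set (EuclideanSpace ℝ (Fin n)))
    (hP : P = convexHull ℝ (S : Set (EuclideanSpace ℝ (Fin n))))
    (hneigh : ∀ u ∈ S, ∀ v ∈ S, u ≠ v → IsExtreme ℝ P (segment ℝ u v))
    (F : Set (EuclideanSpace ℝ (Fin n)))
    (hFc : IsClosed F) (hFconv : Convex ℝ F)
    (hF : IsExtreme ℝ P F)
    (hdim : Module.finrank ℝ (vectorSpan ℝ F) = 2) :
    ∃ a b c : EuclideanSpace ℝ (Fin n),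
      AffineIndependent ℝ ![a, b, c] ∧ F = convexHull ℝ {a, b, c} := by
  classical
  set E := F.extremePoints ℝ with hE
  have hES : E ⊆ (S : Set (EuclideanSpace ℝ (Fin n))) := by
    intro x hx
    have hx' := hF.extremePoints_subset_extremePoints hx
    rw [hP] at hx'
    exact extremePoints_convexHull_subset hx'
  have hEF : E ⊆ F := extremePoints_subset
  have hEfin : E.Finite := S.finite_toSet.subset hES
  have hPcomp : IsCompact P := by rw [hP]; exact S.finite_toSet.isCompact_convexHull ℝ
  have hFcomp : IsCompact F := hPcomp.of_isClosed_subset hFc hF.1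
  have hFE : F = convexHull ℝ E := by
    conv_lhs => rw [← closure_convexHull_extremePoints hFcomp hFconv]
    exact (hEfin.isClosed_convexHull ℝ).closure_eq
  have hvs : vectorSpan ℝ E = vectorSpan ℝ F := by
    rw [hFE]
    conv_rhs => rw [← direction_affineSpan, affineSpan_convexHull, direction_affineSpan]
  have hdimE : Module.finrank ℝ (vectorSpan ℝ E) = 2 := by rw [hvs]; exact hdim
  -- extreme point trapped in a hull of a subset of F must be in the subset
  have lemA : ∀ x ∈ E, ∀ B : Set (EuclideanSpace ℝ (Fin n)), B ⊆ F →
      x ∈ convexHull ℝ B → x ∈ B := by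
    intro x hx B hBF hxB
    have h1 : convexHull ℝ B ⊆ F := convexHull_min hBF hFconv
    exact extremePoints_convexHull_subset
      (inter_extremePoints_subset_extremePoints_of_subset h1 ⟨hxB, hx⟩)
  -- extreme point can't be inside a segment of F avoiding it as endpoint
  have notinseg : ∀ y u v : EuclideanSpace ℝ (Fin n), y ∈ E → u ∈ F → v ∈ F →
      y ≠ u → y ≠ v → y ∈ segment ℝ u v → False := by
    intro y u v hy hu hv hyu hyv hseg
    rcases (mem_extremePoints_iff_forall_segment.1 hy).2 u hu v hv hseg with h | h
    · exact hyu h.symm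
    · exact hyv h.symm
  -- two segments between four distinct extreme points cannot cross
  have cross : ∀ u v w z : EuclideanSpace ℝ (Fin n), u ∈ E → v ∈ E → w ∈ E → z ∈ E →
      u ≠ v → w ≠ u → w ≠ v → z ≠ u → z ≠ v → w ≠ z →
      ∀ x, x ∈ segment ℝ u v → x ∈ segment ℝ w z → False := by
    intro u v w z hu hv hw hz huv hwu hwv hzu hzv hwz x hx1 hx2
    have hface := hneigh u (hES hu) v (hES hv) huv
    rw [← insert_endpoints_openSegment] at hx2
    rcases hx2 with heq | heq | hx2
    · exact notinseg w u v hw (hEF hu) (hEF hv) hwu hwv (heq ▸ hx1)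
    · exact notinseg z u v hz (hEF hu) (hEF hv) hzu hzv (heq ▸ hx1)
    · have hmem := hface.2 (hF.1 (hEF hw)) (hF.1 (hEF hz)) hx1 hx2
      exact notinseg w u v hw (hEF hu) (hEF hv) hwu hwv hmem
  have dis1 : ∀ u v w z : EuclideanSpace ℝ (Fin n), u ∈ E → v ∈ E → w ∈ E → z ∈ E →
      u ≠ v → u ≠ w → u ≠ z →
      ∀ x, x ∈ convexHull ℝ ({u} : Set (EuclideanSpace ℝ (Fin n))) →
      x ∈ convexHull ℝ ({v, w, z} : Set (EuclideanSpace ℝ (Fin n))) → False := by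
    intro u v w z hu hv hw hz huv huw huz x hx1 hx2
    rw [convexHull_singleton, Set.mem_singleton_iff] at hx1
    subst hx1
    have hsub : ({v, w, z} : Set (EuclideanSpace ℝ (Fin n))) ⊆ F := by
      intro y hy
      rcases hy with rfl | rfl | rfl
      · exact hEF hv
      · exact hEF hw
      · exact hEF hz
    have hx := lemA _ hu _ hsub hx2
    rcases hx with h | h | h
    · exact huv h
    · exact huw h
    · exact huz h
  -- no four distinct extreme points
  have nofour : ∀ a b c d : EuclideanSpace ℝ (Fin n), a ∈ E → b ∈ E → c ∈ E → d ∈ E →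
      a ≠ b → a ≠ c → a ≠ d → b ≠ c → b ≠ d → c ≠ d → False := by
    intro a b c d ha hb hc hd hab hac had hbc hbd hcd
    set f : Fin 4 → EuclideanSpace ℝ (Fin n) := ![a, b, c, d] with hf
    have hf0 : f 0 = a := rfl
    have hf1 : f 1 = b := rfl
    have hf2 : f 2 = c := rfl
    have hf3 : f 3 = d := rfl
    have hrange : Set.range f ⊆ F := by
      rintro _ ⟨j, rfl⟩
      fin_cases j
      · exact hEF ha
      · exact hEF hb
      · exact hEF hc
      · exact hEF hd
    have hnai : ¬ AffineIndependent ℝ f := by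
      rw [affineIndependent_iff_not_finrank_vectorSpan_le ℝ f
        (show Fintype.card (Fin 4) = 2 + 2 by simp), not_not]
      calc Module.finrank ℝ (vectorSpan ℝ (Set.range f))
          ≤ Module.finrank ℝ (vectorSpan ℝ F) :=
            Submodule.finrank_mono (vectorSpan_mono ℝ hrange)
        _ = 2 := hdim
    obtain ⟨I, x, hx1, hx2⟩ := Convex.radon_partition hnai
    have key : ∀ (J : Set (Fin 4)) (T : Set (EuclideanSpace ℝ (Fin n))),
        ((0 : Fin 4) ∈ J → f 0 ∈ T) → ((1 : Fin 4) ∈ J → f 1 ∈ T) →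
        ((2 : Fin 4) ∈ J → f 2 ∈ T) → ((3 : Fin 4) ∈ J → f 3 ∈ T) →
        convexHull ℝ (f '' J) ⊆ convexHull ℝ T := by
      intro J T g0 g1 g2 g3
      apply convexHull_mono
      rintro _ ⟨j, hj, rfl⟩
      fin_cases j
      exacts [g0 hj, g1 hj, g2 hj, g3 hj]
    by_cases h0 : (0 : Fin 4) ∈ I <;> by_cases h1 : (1 : Fin 4) ∈ I <;>
      by_cases h2 : (2 : Fin 4) ∈ I <;> by_cases h3 : (3 : Fin 4) ∈ I
    -- TTTT : Iᶜ empty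
    · have : x ∈ convexHull ℝ (∅ : Set (EuclideanSpace ℝ (Fin n))) :=
        key Iᶜ ∅ (fun h => absurd h0 h) (fun h => absurd h1 h) (fun h => absurd h2 h)
          (fun h => absurd h3 h) hx2
      simp at this
    -- TTTF : Iᶜ ⊆ {3}
    · exact dis1 d a b c hd ha hb hc (Ne.symm had) (Ne.symm hbd) (Ne.symm hcd) x
        (key Iᶜ {d} (fun h => absurd h0 h) (fun h => absurd h1 h) (fun h => absurd h2 h)
          (fun _ => by simp [hf3]) hx2)
        (key I {a, b, c} (fun _ => by simp [hf0]) (fun _ => by simp [hf1])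
          (fun _ => by simp [hf2]) (fun h => absurd h h3) hx1)
    -- TTFT
    · exact dis1 c a b d hc ha hb hd (Ne.symm hac) (Ne.symm hbc) hcd x
        (key Iᶜ {c} (fun h => absurd h0 h) (fun h => absurd h1 h) (fun _ => by simp [hf2])
          (fun h => absurd h3 h) hx2)
        (key I {a, b, d} (fun _ => by simp [hf0]) (fun _ => by simp [hf1])
          (fun h => absurd h h2) (fun _ => by simp [hf3]) hx1)
    -- TTFF : {a,b} vs {c,d}
    · refine cross a b c d ha hb hc hd hab (Ne.symm hac) (Ne.symm hbc)
        (Ne.symm had) (Ne.symm hbd) hcd x ?_ ?_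
      · have := key I {a, b} (fun _ => by simp [hf0]) (fun _ => by simp [hf1])
          (fun h => absurd h h2) (fun h => absurd h h3) hx1
        rwa [convexHull_pair] at this
      · have := key Iᶜ {c, d} (fun h => absurd h0 h) (fun h => absurd h1 h)
          (fun _ => by simp [hf2]) (fun _ => by simp [hf3]) hx2
        rwa [convexHull_pair] at this
    -- TFTT
    · exact dis1 b a c d hb ha hc hd (Ne.symm hab) hbc hbd x
        (key Iᶜ {b} (fun h => absurd h0 h) (fun _ => by simp [hf1]) (fun h => absurd h2 h)
          (fun h => absurd h3 h) hx2)
        (key I {a, c, d} (fun _ => by simp [hf0]) (fun h => absurd h h1)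
          (fun _ => by simp [hf2]) (fun _ => by simp [hf3]) hx1)
    -- TFTF : {a,c} vs {b,d}
    · refine cross a c b d ha hc hb hd hac (Ne.symm hab) hbc
        (Ne.symm had) (Ne.symm hcd) hbd x ?_ ?_
      · have := key I {a, c} (fun _ => by simp [hf0]) (fun h => absurd h h1)
          (fun _ => by simp [hf2]) (fun h => absurd h h3) hx1
        rwa [convexHull_pair] at this
      · have := key Iᶜ {b, d} (fun h => absurd h0 h) (fun _ => by simp [hf1])
          (fun h => absurd h2 h) (fun _ => by simp [hf3]) hx2
        rwa [convexHull_pair] at this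
    -- TFFT : {a,d} vs {b,c}
    · refine cross a d b c ha hd hb hc had (Ne.symm hab) hbd
        (Ne.symm hac) hcd hbc x ?_ ?_
      · have := key I {a, d} (fun _ => by simp [hf0]) (fun h => absurd h h1)
          (fun h => absurd h h2) (fun _ => by simp [hf3]) hx1
        rwa [convexHull_pair] at this
      · have := key Iᶜ {b, c} (fun h => absurd h0 h) (fun _ => by simp [hf1])
          (fun _ => by simp [hf2]) (fun h => absurd h3 h) hx2
        rwa [convexHull_pair] at this
    -- TFFF : I ⊆ {0}
    · exact dis1 a b c d ha hb hc hd hab hac had x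
        (key I {a} (fun _ => by simp [hf0]) (fun h => absurd h h1) (fun h => absurd h h2)
          (fun h => absurd h h3) hx1)
        (key Iᶜ {b, c, d} (fun h => absurd h0 h) (fun _ => by simp [hf1])
          (fun _ => by simp [hf2]) (fun _ => by simp [hf3]) hx2)
    -- FTTT
    · exact dis1 a b c d ha hb hc hd hab hac had x
        (key Iᶜ {a} (fun _ => by simp [hf0]) (fun h => absurd h1 h) (fun h => absurd h2 h)
          (fun h => absurd h3 h) hx2)
        (key I {b, c, d} (fun h => absurd h h0) (fun _ => by simp [hf1])
          (fun _ => by simp [hf2]) (fun _ => by simp [hf3]) hx1)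
    -- FTTF : {b,c} vs {a,d}
    · refine cross b c a d hb hc ha hd hbc hab hac (Ne.symm hbd) (Ne.symm hcd) had x ?_ ?_
      · have := key I {b, c} (fun h => absurd h h0) (fun _ => by simp [hf1])
          (fun _ => by simp [hf2]) (fun h => absurd h h3) hx1
        rwa [convexHull_pair] at this
      · have := key Iᶜ {a, d} (fun _ => by simp [hf0]) (fun h => absurd h1 h)
          (fun h => absurd h2 h) (fun _ => by simp [hf3]) hx2
        rwa [convexHull_pair] at this
    -- FTFT : {b,d} vs {a,c}
    · refine cross b d a c hb hd ha hc hbd hab had (Ne.symm hbc) hcd hac x ?_ ?_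
      · have := key I {b, d} (fun h => absurd h h0) (fun _ => by simp [hf1])
          (fun h => absurd h h2) (fun _ => by simp [hf3]) hx1
        rwa [convexHull_pair] at this
      · have := key Iᶜ {a, c} (fun _ => by simp [hf0]) (fun h => absurd h1 h)
          (fun _ => by simp [hf2]) (fun h => absurd h3 h) hx2
        rwa [convexHull_pair] at this
    -- FTFF : I ⊆ {1}
    · exact dis1 b a c d hb ha hc hd (Ne.symm hab) hbc hbd x
        (key I {b} (fun h => absurd h h0) (fun _ => by simp [hf1]) (fun h => absurd h h2)
          (fun h => absurd h h3) hx1)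
        (key Iᶜ {a, c, d} (fun _ => by simp [hf0]) (fun h => absurd h1 h)
          (fun _ => by simp [hf2]) (fun _ => by simp [hf3]) hx2)
    -- FFTT : {c,d} vs {a,b}
    · refine cross c d a b hc hd ha hb hcd hac had hbc hbd hab x ?_ ?_
      · have := key I {c, d} (fun h => absurd h h0) (fun h => absurd h h1)
          (fun _ => by simp [hf2]) (fun _ => by simp [hf3]) hx1
        rwa [convexHull_pair] at this
      · have := key Iᶜ {a, b} (fun _ => by simp [hf0]) (fun _ => by simp [hf1])
          (fun h => absurd h2 h) (fun h => absurd h3 h) hx2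
        rwa [convexHull_pair] at this
    -- FFTF : I ⊆ {2}
    · exact dis1 c a b d hc ha hb hd (Ne.symm hac) (Ne.symm hbc) hcd x
        (key I {c} (fun h => absurd h h0) (fun h => absurd h h1) (fun _ => by simp [hf2])
          (fun h => absurd h h3) hx1)
        (key Iᶜ {a, b, d} (fun _ => by simp [hf0]) (fun _ => by simp [hf1])
          (fun h => absurd h2 h) (fun _ => by simp [hf3]) hx2)
    -- FFFT : I ⊆ {3}
    · exact dis1 d a b c hd ha hb hc (Ne.symm had) (Ne.symm hbd) (Ne.symm hcd) x
        (key I {d} (fun h => absurd h h0) (fun h => absurd h h1) (fun h => absurd h h2)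
          (fun _ => by simp [hf3]) hx1)
        (key Iᶜ {a, b, c} (fun _ => by simp [hf0]) (fun _ => by simp [hf1])
          (fun _ => by simp [hf2]) (fun h => absurd h3 h) hx2)
    -- FFFF : I empty
    · have : x ∈ convexHull ℝ (∅ : Set (EuclideanSpace ℝ (Fin n))) :=
        key I ∅ (fun h => absurd h h0) (fun h => absurd h h1) (fun h => absurd h h2)
          (fun h => absurd h h3) hx1
      simp at this
  -- E has exactly three elements
  have hcard : E.ncard = 3 := by
    rcases lt_trichotomy E.ncard 3 with hlt | heq | hgt
    · exfalso
      interval_cases h : E.ncard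
      · rw [Set.ncard_eq_zero hEfin] at h
        rw [h] at hdimE
        rw [vectorSpan_empty, finrank_bot] at hdimE
        omega
      · obtain ⟨u, hu⟩ := Set.ncard_eq_one.1 h
        rw [hu] at hdimE
        rw [vectorSpan_singleton, finrank_bot] at hdimE
        omega
      · obtain ⟨u, v, huv, huvE⟩ := Set.ncard_eq_two.1 h
        rw [huvE, vectorSpan_pair] at hdimE
        by_cases hz : u -ᵥ v = 0
        · rw [hz, Submodule.span_zero_singleton, finrank_bot] at hdimE
          omega
        · rw [finrank_span_singleton hz] at hdimE
          omega
    · exact heq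
    · exfalso
      obtain ⟨t, htE, htc⟩ := Set.exists_subset_card_eq (show 4 ≤ E.ncard from hgt)
      have htfin : t.Finite := hEfin.subset htE
      have htne : t.Nonempty := by
        rw [← Set.ncard_pos htfin]; omega
      obtain ⟨a, ha⟩ := htne
      have h3 : (t \ {a}).ncard = 3 := by
        rw [Set.ncard_diff_singleton_of_mem ha, htc]
      obtain ⟨b, c, d, hbc, hbd, hcd, heq3⟩ := Set.ncard_eq_three.1 h3
      have hb : b ∈ t \ {a} := by rw [heq3]; simp
      have hc : c ∈ t \ {a} := by rw [heq3]; simp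
      have hd : d ∈ t \ {a} := by rw [heq3]; simp
      exact nofour a b c d (htE ha) (htE hb.1) (htE hc.1) (htE hd.1)
        (fun h => hb.2 (by simp [← h])) (fun h => hc.2 (by simp [← h]))
        (fun h => hd.2 (by simp [← h])) hbc hbd hcd
  obtain ⟨a, b, c, hab, hac, hbc, hEeq⟩ := Set.ncard_eq_three.1 hcard
  refine ⟨a, b, c, ?_, ?_⟩
  · rw [affineIndependent_iff_not_finrank_vectorSpan_le ℝ _
      (show Fintype.card (Fin 3) = 1 + 2 by simp)]
    have hr : Set.range ![a, b, c] = ({a, b, c} : Set (EuclideanSpace ℝ (Fin n))) := by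
      ext y
      constructor
      · rintro ⟨j, rfl⟩
        fin_cases j
        · exact Set.mem_insert _ _
        · exact Set.mem_insert_of_mem _ (Set.mem_insert _ _)
        · exact Set.mem_insert_of_mem _ (Set.mem_insert_of_mem _ rfl)
      · intro hy
        rcases hy with rfl | rfl | rfl
        exacts [⟨0, rfl⟩, ⟨1, rfl⟩, ⟨2, rfl⟩]
    rw [hr, ← hEeq, hdimE]
    omega
  · rw [hFE, hEeq]
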